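/- Let φ : F → M be surjective with F free with finite basis E, R ⊆ F × F the kernel congruence, B a generating set for R, and E^× = E ∩ φ⁻¹(M^×). For a subset J ⊆ E \ E^×, the following are equivalent: (1) J = E ∩ φ⁻¹(p) for some prime ideal p of M; (2) for all (a,b) ∈ R, a ∈ J + F iff b ∈ J + F; (3) for all (a,b) ∈ B, a ∈ J + F iff b ∈ J + F. -/

import Mathlib

lemma split_iff {E : Type*} [DecidableEq E] (J : Set E) (a : E → ℕ) :
    (∃ e ∈ J, ∃ g : E → ℕ, a = Pi.single e 1 + g) ↔ ∃ e ∈ J, 1 ≤ a e := by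
  constructor
  · rintro ⟨e, he, g, rfl⟩
    exact ⟨e, he, by simp⟩
  · rintro ⟨e, he, hae⟩
    refine ⟨e, he, a - Pi.single e 1, ?_⟩
    funext x
    by_cases hx : x = e
    · simp [hx]; omega
    · simp [hx, Pi.single_apply]

lemma smul_mem_prime {M : Type*} [AddCommMonoid M] (p : Set M)
    (hprime : ∀ a b : M, a + b ∈ p → a ∈ p ∨ b ∈ p) (h0 : (0 : M) ∉ p)
    (n : ℕ) (x : M) (hx : n • x ∈ p) : x ∈ p := by
  induction n with
  | zero => simp at hx; exact absurd hx h0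
  | succ n ih =>
    rw [succ_nsmul] at hx
    rcases hprime _ _ hx with h | h
    · exact ih h
    · exact h

lemma sum_mem_prime {M : Type*} [AddCommMonoid M] {E : Type*} (p : Set M)
    (hprime : ∀ a b : M, a + b ∈ p → a ∈ p ∨ b ∈ p) (h0 : (0 : M) ∉ p)
    (s : Finset E) (f : E → M) (h : ∑ e ∈ s, f e ∈ p) : ∃ e ∈ s, f e ∈ p := by
  classical
  induction s using Finset.induction with
  | empty => simp at h; exact absurd h h0
  | insert _ _ hx ih =>
    rw [Finset.sum_insert hx] at h
    rcases hprime _ _ h with h | h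
    · exact ⟨_, Finset.mem_insert_self _ _, h⟩
    · obtain ⟨e, he, hfe⟩ := ih h
      exact ⟨e, Finset.mem_insert_of_mem he, hfe⟩

theorem primality_checked_on_presentation (E : Type*) [Fintype E] [DecidableEq E]
    (M : Type*) [AddCommMonoid M]
    (φ : (E → ℕ) →+ M) (hsurj : Function.Surjective φ)
    (B : Set ((E → ℕ) × (E → ℕ)))
    (hgen : ∀ a b : E → ℕ, φ a = φ b ↔ addConGen (fun u v => (u, v) ∈ B) a b)
    (J : Set E) (hJ : ∀ e ∈ J, ¬IsAddUnit (φ (Pi.single e 1))) :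
    ((∃ p : Set M, (∀ a ∈ p, ∀ m : M, a + m ∈ p) ∧ p ≠ Set.univ ∧
        (∀ a b : M, a + b ∈ p → a ∈ p ∨ b ∈ p) ∧
        J = {e : E | φ (Pi.single e 1) ∈ p}) ↔
      (∀ a b : E → ℕ, φ a = φ b →
        ((∃ e ∈ J, ∃ g : E → ℕ, a = Pi.single e 1 + g) ↔ (∃ e ∈ J, ∃ g : E → ℕ, b = Pi.single e 1 + g)))) ∧
    ((∀ a b : E → ℕ, φ a = φ b →
        ((∃ e ∈ J, ∃ g : E → ℕ, a = Pi.single e 1 + g) ↔ (∃ e ∈ J, ∃ g : E → ℕ, b = Pi.single e 1 + g))) ↔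
      (∀ q ∈ B, ((∃ e ∈ J, ∃ g : E → ℕ, q.1 = Pi.single e 1 + g) ↔
        (∃ e ∈ J, ∃ g : E → ℕ, q.2 = Pi.single e 1 + g)))) := by
  simp only [split_iff]
  set P : (E → ℕ) → Prop := fun a => ∃ e ∈ J, 1 ≤ a e with hP
  have Padd : ∀ a b : E → ℕ, P (a + b) ↔ P a ∨ P b := by
    intro a b
    constructor
    · rintro ⟨e, he, h⟩
      simp only [Pi.add_apply] at h
      by_cases h' : 1 ≤ a e
      · exact Or.inl ⟨e, he, h'⟩
      · exact Or.inr ⟨e, he, by omega⟩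
    · rintro (⟨e, he, h⟩ | ⟨e, he, h⟩) <;> exact ⟨e, he, by simp only [Pi.add_apply]; omega⟩
  constructor
  · constructor
    · -- (1) → (2)
      rintro ⟨p, hideal, hproper, hprime, hJp⟩ a b hab
      have h0 : (0 : M) ∉ p := by
        intro h0
        apply hproper
        ext m
        simp only [Set.mem_univ, iff_true]
        simpa using hideal 0 h0 m
      have key : ∀ a : E → ℕ, P a ↔ φ a ∈ p := by
        intro a
        constructor
        · intro hPa
          obtain ⟨e', he', g, rfl⟩ := (split_iff J a).2 hPa
          rw [hJp] at he'
          rw [map_add]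
          exact hideal _ he' _
        · intro hp
          have ha : a = ∑ e, Pi.single e (a e) := (Finset.univ_sum_single a).symm
          rw [ha, map_sum] at hp
          obtain ⟨e, _, hfe⟩ := sum_mem_prime p hprime h0 _ _ hp
          have hne : a e ≠ 0 := by
            rintro h
            rw [h] at hfe
            simp at hfe
            exact h0 hfe
          have hmem : φ (Pi.single e 1) ∈ p := by
            have hsingle : (Pi.single e (a e) : E → ℕ) = (a e) • Pi.single e 1 := by
              funext x; by_cases hx : x = e <;> simp [hx, Pi.single_apply]
            rw [hsingle, map_nsmul] at hfe
            exact smul_mem_prime p hprime h0 _ _ hfe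
          refine ⟨e, ?_, Nat.one_le_iff_ne_zero.2 hne⟩
          rw [hJp]; exact hmem
      show P a ↔ P b
      rw [key a, key b, hab]
    · -- (2) → (1)
      intro h2
      refine ⟨{m : M | ∃ a : E → ℕ, φ a = m ∧ P a}, ?_, ?_, ?_, ?_⟩
      · rintro m ⟨a, rfl, hPa⟩ m'
        obtain ⟨b, rfl⟩ := hsurj m'
        exact ⟨a + b, map_add φ a b, (Padd a b).2 (Or.inl hPa)⟩
      · intro huniv
        have h0 : (0 : M) ∈ {m : M | ∃ a : E → ℕ, φ a = m ∧ P a} := huniv ▸ Set.mem_univ 0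
        obtain ⟨a, ha, hPa⟩ := h0
        have := (h2 a 0 (by rw [ha, map_zero])).1 hPa
        obtain ⟨e, _, h⟩ := this
        simp at h
      · rintro m m' ⟨c, hc, hPc⟩
        obtain ⟨a, rfl⟩ := hsurj m
        obtain ⟨b, rfl⟩ := hsurj m'
        have hPab : P (a + b) := (h2 c (a + b) (by rw [hc, map_add])).1 hPc
        rcases (Padd a b).1 hPab with h | h
        · exact Or.inl ⟨a, rfl, h⟩
        · exact Or.inr ⟨b, rfl, h⟩
      · ext e
        simp only [Set.mem_setOf_eq]
        constructor
        · intro he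
          exact ⟨Pi.single e 1, rfl, e, he, by simp⟩
        · rintro ⟨a, ha, hPa⟩
          obtain ⟨e', he', h⟩ := (h2 a (Pi.single e 1) ha).1 hPa
          have he'e : e' = e := by
            by_contra hne
            simp [Pi.single_apply, hne] at h
          exact he'e ▸ he'
  · -- (2) ↔ (3)
    constructor
    · intro h2 q hq
      exact h2 q.1 q.2 ((hgen q.1 q.2).2 (AddConGen.Rel.of _ _ hq))
    · intro h3 a b hab
      have hcon : addConGen (fun u v => (u, v) ∈ B) a b := (hgen a b).1 hab
      let c : AddCon (E → ℕ) :=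
        { r := fun x y => (P x ↔ P y)
          iseqv := ⟨fun _ => Iff.rfl, Iff.symm, Iff.trans⟩
          add' := by
            intro w x y z h1 h2
            show P (w + y) ↔ P (x + z)
            rw [Padd, Padd]
            exact or_congr h1 h2 }
      exact (AddCon.addConGen_le (c := c)).2 (fun x y hxy => h3 (x, y) hxy) hcon
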